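/- Let φ : ℝ → ℝ be the lift of an orientation-preserving C^∞ diffeomorphism of S¹ (φ is C^∞, φ' > 0, φ(θ+2π) = φ(θ)+2π), and for nonzero integers m, n set I_{n,m} = (1/2π)∫₀^{2π} e^{i(mφ(θ) − nθ)}dθ. Then Σ_{n>0, m<0} |n|·|I_{n,m}|² < ∞ and Σ_{n<0, m>0} |n|·|I_{n,m}|² < ∞. -/

import Mathlib

open MeasureTheory

/-- `I_{n,m} = (1/2π) ∫₀^{2π} e^{i(mφ(θ) − nθ)} dθ`, the `n`-th Fourier coefficient of
`θ ↦ e^{imφ(θ)}`. -/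
noncomputable def Icoef (φ : ℝ → ℝ) (n m : ℤ) : ℂ :=
  (1 / (2 * Real.pi)) * ∫ θ in (0:ℝ)..(2 * Real.pi),
    Complex.exp (Complex.I * ((m : ℝ) * φ θ - (n : ℝ) * θ : ℝ))

namespace OffdiagHS

/-- The integrand `e^{i(mφ(θ)-nθ)}`. -/
noncomputable def Ff (φ : ℝ → ℝ) (n m : ℤ) (θ : ℝ) : ℂ :=
  Complex.exp (Complex.I * (((m : ℝ) * φ θ - (n : ℝ) * θ : ℝ) : ℂ))

/-- `i·ψ'` where `ψ` is the phase. -/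
noncomputable def hf (φ : ℝ → ℝ) (n m : ℤ) (θ : ℝ) : ℂ :=
  Complex.I * (((m : ℝ) * deriv φ θ - (n : ℝ) : ℝ) : ℂ)

/-- `i·ψ''`. -/
noncomputable def u2 (φ : ℝ → ℝ) (m : ℤ) (θ : ℝ) : ℂ :=
  Complex.I * (((m : ℝ) * deriv (deriv φ) θ : ℝ) : ℂ)

/-- `i·ψ'''`. -/
noncomputable def u3 (φ : ℝ → ℝ) (m : ℤ) (θ : ℝ) : ℂ :=
  Complex.I * (((m : ℝ) * deriv (deriv (deriv φ)) θ : ℝ) : ℂ)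

/-- `g = 1/(iψ')`. -/
noncomputable def gf (φ : ℝ → ℝ) (n m : ℤ) (θ : ℝ) : ℂ := 1 / hf φ n m θ

/-- `g'`. -/
noncomputable def g1 (φ : ℝ → ℝ) (n m : ℤ) (θ : ℝ) : ℂ :=
  -u2 φ m θ / hf φ n m θ ^ 2

/-- `g''`. -/
noncomputable def G2 (φ : ℝ → ℝ) (n m : ℤ) (θ : ℝ) : ℂ :=
  (-u3 φ m θ * hf φ n m θ ^ 2
    - -u2 φ m θ * (u2 φ m θ * hf φ n m θ + hf φ n m θ * u2 φ m θ)) / (hf φ n m θ ^ 2) ^ 2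

lemma periodic_deriv_of_periodic {f : ℝ → ℝ} {c : ℝ} (h : Function.Periodic f c) :
    Function.Periodic (deriv f) c := by
  intro x
  have hfc : (fun y => f (y + c)) = f := funext h
  rw [← deriv_comp_add_const, hfc]

variable {φ : ℝ → ℝ}

lemma contDiff_d1 (hφ : ContDiff ℝ (⊤ : ℕ∞) φ) : ContDiff ℝ (⊤ : ℕ∞) (deriv φ) :=
  (contDiff_infty_iff_deriv.mp hφ).2

lemma contDiff_d2 (hφ : ContDiff ℝ (⊤ : ℕ∞) φ) : ContDiff ℝ (⊤ : ℕ∞) (deriv (deriv φ)) :=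
  (contDiff_infty_iff_deriv.mp (contDiff_d1 hφ)).2

lemma contDiff_d3 (hφ : ContDiff ℝ (⊤ : ℕ∞) φ) :
    ContDiff ℝ (⊤ : ℕ∞) (deriv (deriv (deriv φ))) :=
  (contDiff_infty_iff_deriv.mp (contDiff_d2 hφ)).2

lemma hasDerivAt_Ff (hφ : ContDiff ℝ (⊤ : ℕ∞) φ) (n m : ℤ) (θ : ℝ) :
    HasDerivAt (Ff φ n m) (Ff φ n m θ * hf φ n m θ) θ := by
  have h1 : HasDerivAt (fun θ => (m : ℝ) * φ θ - (n : ℝ) * θ)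
      ((m : ℝ) * deriv φ θ - (n : ℝ)) θ := by
    have ha : HasDerivAt φ (deriv φ θ) θ :=
      ((hφ.differentiable (by simp)) θ).hasDerivAt
    have hb : HasDerivAt (fun θ : ℝ => (n : ℝ) * θ) ((n : ℝ)) θ := by
      simpa using (hasDerivAt_id θ).const_mul (n : ℝ)
    exact (ha.const_mul _).sub hb
  exact (h1.ofReal_comp.const_mul Complex.I).cexp

lemma hasDerivAt_hf (hφ : ContDiff ℝ (⊤ : ℕ∞) φ) (n m : ℤ) (θ : ℝ) :
    HasDerivAt (hf φ n m) (u2 φ m θ) θ := by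
  have h1 : HasDerivAt (deriv φ) (deriv (deriv φ) θ) θ :=
    (((contDiff_d1 hφ).differentiable (by simp)) θ).hasDerivAt
  have h2 : HasDerivAt (fun θ => (m : ℝ) * deriv φ θ - (n : ℝ))
      ((m : ℝ) * deriv (deriv φ) θ) θ := (h1.const_mul _).sub_const _
  exact h2.ofReal_comp.const_mul Complex.I

lemma hasDerivAt_u2 (hφ : ContDiff ℝ (⊤ : ℕ∞) φ) (m : ℤ) (θ : ℝ) :
    HasDerivAt (u2 φ m) (u3 φ m θ) θ := by
  have h1 : HasDerivAt (deriv (deriv φ)) (deriv (deriv (deriv φ)) θ) θ :=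
    (((contDiff_d2 hφ).differentiable (by simp)) θ).hasDerivAt
  exact ((h1.const_mul _).ofReal_comp).const_mul Complex.I

lemma hasDerivAt_gf (hφ : ContDiff ℝ (⊤ : ℕ∞) φ) (n m : ℤ)
    (hne : ∀ θ, hf φ n m θ ≠ 0) (θ : ℝ) :
    HasDerivAt (gf φ n m) (g1 φ n m θ) θ := by
  have h := (hasDerivAt_const θ (1:ℂ)).div (hasDerivAt_hf hφ n m θ) (hne θ)
  have hval : g1 φ n m θ = (0 * hf φ n m θ - 1 * u2 φ m θ) / hf φ n m θ ^ 2 := by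
    simp only [g1]; ring
  rw [hval]
  exact h

lemma hasDerivAt_sq_hf (hφ : ContDiff ℝ (⊤ : ℕ∞) φ) (n m : ℤ) (θ : ℝ) :
    HasDerivAt (fun y => hf φ n m y ^ 2) (u2 φ m θ * hf φ n m θ + hf φ n m θ * u2 φ m θ) θ := by
  have h := (hasDerivAt_hf hφ n m θ).mul (hasDerivAt_hf hφ n m θ)
  have h2 : (fun y => hf φ n m y ^ 2) = fun y => hf φ n m y * hf φ n m y := by
    funext y
    ring
  rw [h2]
  exact h

lemma hasDerivAt_g1 (hφ : ContDiff ℝ (⊤ : ℕ∞) φ) (n m : ℤ)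
    (hne : ∀ θ, hf φ n m θ ≠ 0) (θ : ℝ) :
    HasDerivAt (g1 φ n m) (G2 φ n m θ) θ :=
  ((hasDerivAt_u2 hφ m θ).neg).div (hasDerivAt_sq_hf hφ n m θ) (pow_ne_zero 2 (hne θ))

lemma continuous_hf (hφ : ContDiff ℝ (⊤ : ℕ∞) φ) (n m : ℤ) : Continuous (hf φ n m) := by
  have h1 := (contDiff_d1 hφ).continuous
  unfold hf
  fun_prop

lemma continuous_u2 (hφ : ContDiff ℝ (⊤ : ℕ∞) φ) (m : ℤ) : Continuous (u2 φ m) := by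
  have h1 := (contDiff_d2 hφ).continuous
  unfold u2
  fun_prop

lemma continuous_u3 (hφ : ContDiff ℝ (⊤ : ℕ∞) φ) (m : ℤ) : Continuous (u3 φ m) := by
  have h1 := (contDiff_d3 hφ).continuous
  unfold u3
  fun_prop

lemma continuous_Ff (hφ : ContDiff ℝ (⊤ : ℕ∞) φ) (n m : ℤ) : Continuous (Ff φ n m) := by
  have h1 := hφ.continuous
  unfold Ff
  fun_prop

lemma continuous_gf (hφ : ContDiff ℝ (⊤ : ℕ∞) φ) (n m : ℤ)
    (hne : ∀ θ, hf φ n m θ ≠ 0) : Continuous (gf φ n m) :=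
  continuous_const.div (continuous_hf hφ n m) hne

lemma continuous_g1 (hφ : ContDiff ℝ (⊤ : ℕ∞) φ) (n m : ℤ)
    (hne : ∀ θ, hf φ n m θ ≠ 0) : Continuous (g1 φ n m) :=
  Continuous.div ((continuous_u2 hφ m).neg) ((continuous_hf hφ n m).pow 2)
    fun θ => pow_ne_zero 2 (hne θ)

lemma continuous_G2 (hφ : ContDiff ℝ (⊤ : ℕ∞) φ) (n m : ℤ)
    (hne : ∀ θ, hf φ n m θ ≠ 0) : Continuous (G2 φ n m) := by
  refine Continuous.div ?_ (((continuous_hf hφ n m).pow 2).pow 2)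
    fun θ => pow_ne_zero 2 (pow_ne_zero 2 (hne θ))
  exact (((continuous_u3 hφ m).neg).mul ((continuous_hf hφ n m).pow 2)).sub
    (((continuous_u2 hφ m).neg).mul (((continuous_u2 hφ m).mul (continuous_hf hφ n m)).add
      ((continuous_hf hφ n m).mul (continuous_u2 hφ m))))

open intervalIntegral in
set_option maxHeartbeats 1600000 in
lemma Icoef_decay (hφ : ContDiff ℝ (⊤ : ℕ∞) φ)
    (hφ' : ∀ θ, 0 < deriv φ θ) (hlift : ∀ θ, φ (θ + 2 * Real.pi) = φ θ + 2 * Real.pi) :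
    ∃ C : ℝ, 0 < C ∧ ∀ n m : ℤ, (m : ℝ) * (n : ℝ) < 0 →
      ‖Icoef φ n m‖ ≤ C / (|(n : ℝ)| + |(m : ℝ)|) ^ 2 := by
  -- periodicity of the derivatives
  have per1 : Function.Periodic (deriv φ) (2 * Real.pi) := by
    intro x
    have h1 : (fun t => φ (t + 2 * Real.pi)) = fun t => φ t + 2 * Real.pi := funext hlift
    rw [← deriv_comp_add_const, h1, deriv_add_const]
  have per2 : Function.Periodic (deriv (deriv φ)) (2 * Real.pi) :=
    periodic_deriv_of_periodic per1
  have per3 : Function.Periodic (deriv (deriv (deriv φ))) (2 * Real.pi) :=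
    periodic_deriv_of_periodic per2
  -- positive lower bound on deriv φ
  obtain ⟨θ₀, hθ₀mem, hθ₀⟩ := isCompact_Icc.exists_isMinOn
    (Set.nonempty_Icc.mpr (by positivity : (0:ℝ) ≤ 2 * Real.pi))
    ((contDiff_d1 hφ).continuous.continuousOn)
  set a : ℝ := deriv φ θ₀ with ha_def
  have ha0 : 0 < a := hφ' θ₀
  have hap : ∀ θ, a ≤ deriv φ θ := by
    intro θ
    obtain ⟨y, hy, hxy⟩ := per1.exists_mem_Ico₀ Real.two_pi_pos θ
    rw [hxy]
    exact hθ₀ (Set.Ico_subset_Icc_self hy)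
  -- bounds on the second and third derivatives
  obtain ⟨B2, hB2⟩ := isCompact_Icc.exists_bound_of_continuousOn
    (s := Set.Icc (0:ℝ) (2 * Real.pi)) ((contDiff_d2 hφ).continuous.continuousOn)
  obtain ⟨B3, hB3⟩ := isCompact_Icc.exists_bound_of_continuousOn
    (s := Set.Icc (0:ℝ) (2 * Real.pi)) ((contDiff_d3 hφ).continuous.continuousOn)
  have hB2' : ∀ θ, |deriv (deriv φ) θ| ≤ B2 := by
    intro θ
    obtain ⟨y, hy, hxy⟩ := per2.exists_mem_Ico₀ Real.two_pi_pos θ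
    rw [hxy, ← Real.norm_eq_abs]
    exact hB2 y (Set.Ico_subset_Icc_self hy)
  have hB3' : ∀ θ, |deriv (deriv (deriv φ)) θ| ≤ B3 := by
    intro θ
    obtain ⟨y, hy, hxy⟩ := per3.exists_mem_Ico₀ Real.two_pi_pos θ
    rw [hxy, ← Real.norm_eq_abs]
    exact hB3 y (Set.Ico_subset_Icc_self hy)
  have hB2nn : 0 ≤ B2 := le_trans (abs_nonneg _) (hB2' 0)
  have hB3nn : 0 ≤ B3 := le_trans (abs_nonneg _) (hB3' 0)
  set c : ℝ := min a 1 with hc_def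
  have hc0 : 0 < c := lt_min ha0 one_pos
  have hca : c ≤ a := min_le_left _ _
  have hc1 : c ≤ 1 := min_le_right _ _
  refine ⟨B3 / c ^ 3 + 3 * B2 ^ 2 / c ^ 4 + 1, by positivity, ?_⟩
  intro n m hmn
  set C0 : ℝ := B3 / c ^ 3 + 3 * B2 ^ 2 / c ^ 4 with hC0_def
  have hC0nn : 0 ≤ C0 := by positivity
  have hn0 : n ≠ 0 := by
    rintro rfl; simp at hmn
  have hm0 : m ≠ 0 := by
    rintro rfl; simp at hmn
  set s : ℝ := |(n : ℝ)| + |(m : ℝ)| with hs_def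
  have h1n : (1:ℝ) ≤ |(n : ℝ)| := by
    rw [← Int.cast_abs]; exact_mod_cast Int.one_le_abs hn0
  have h1m : (1:ℝ) ≤ |(m : ℝ)| := by
    rw [← Int.cast_abs]; exact_mod_cast Int.one_le_abs hm0
  have hs0 : 0 < s := by rw [hs_def]; linarith
  have hmles : |(m : ℝ)| ≤ s := by
    rw [hs_def]; linarith [abs_nonneg ((n:ℝ))]
  -- lower bound on the phase derivative
  have hph : ∀ θ, c * s ≤ |(m : ℝ) * deriv φ θ - (n : ℝ)| := by
    intro θ
    have hpa := hap θ
    have hp0 := hφ' θ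
    rcases lt_trichotomy (m : ℝ) 0 with hm | hm | hm
    · have hn : (0:ℝ) < (n : ℝ) := by
        by_contra h'
        push_neg at h'
        nlinarith [mul_nonneg (neg_nonneg.2 hm.le) (neg_nonneg.2 h')]
      have hkey : (m : ℝ) * deriv φ θ - (n : ℝ) < 0 := by
        nlinarith [mul_neg_of_neg_of_pos hm hp0]
      rw [abs_of_neg hkey, hs_def, abs_of_pos hn, abs_of_neg hm]
      have hmul : c * (-(m:ℝ)) ≤ (-(m:ℝ)) * deriv φ θ := by
        have hcd : c ≤ deriv φ θ := le_trans hca hpa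
        nlinarith
      nlinarith [mul_le_mul_of_nonneg_right hc1 hn.le]
    · exact (hm0 (by exact_mod_cast hm)).elim
    · have hn : (n : ℝ) < 0 := by
        by_contra h'
        push_neg at h'
        nlinarith [mul_nonneg hm.le h']
      have hkey : 0 < (m : ℝ) * deriv φ θ - (n : ℝ) := by
        nlinarith [mul_pos hm hp0]
      rw [abs_of_pos hkey, hs_def, abs_of_neg hn, abs_of_pos hm]
      have hmul : c * (m:ℝ) ≤ (m:ℝ) * deriv φ θ := by
        have hcd : c ≤ deriv φ θ := le_trans hca hpa
        nlinarith
      nlinarith [mul_le_mul_of_nonneg_right hc1 (neg_pos.2 hn).le]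
  have hnorm_hf : ∀ θ, ‖hf φ n m θ‖ = |(m : ℝ) * deriv φ θ - (n : ℝ)| := by
    intro θ
    rw [show hf φ n m θ = Complex.I * (((m : ℝ) * deriv φ θ - (n : ℝ) : ℝ) : ℂ) from rfl,
      norm_mul, Complex.norm_I, one_mul, Complex.norm_real, Real.norm_eq_abs]
  have hne : ∀ θ, hf φ n m θ ≠ 0 := by
    intro θ h0
    have h1 := hnorm_hf θ
    rw [h0, norm_zero] at h1
    have h2 := hph θ
    nlinarith
  -- boundary values agree
  have hd0 : deriv φ (2 * Real.pi) = deriv φ 0 := by simpa using per1 0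
  have hd20 : deriv (deriv φ) (2 * Real.pi) = deriv (deriv φ) 0 := by simpa using per2 0
  have hφ2 : φ (2 * Real.pi) = φ 0 + 2 * Real.pi := by simpa using hlift 0
  have hFF : Ff φ n m (2 * Real.pi) = Ff φ n m 0 := by
    have harg : Complex.I * (((m : ℝ) * φ (2 * Real.pi) - (n : ℝ) * (2 * Real.pi) : ℝ) : ℂ)
        = Complex.I * (((m : ℝ) * φ 0 - (n : ℝ) * 0 : ℝ) : ℂ)
          + ((m - n : ℤ) : ℂ) * (2 * (Real.pi : ℂ) * Complex.I) := by
      rw [hφ2]; push_cast; ring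
    simp only [Ff]
    rw [harg, Complex.exp_add, Complex.exp_int_mul_two_pi_mul_I, mul_one]
  have hgf0 : gf φ n m (2 * Real.pi) = gf φ n m 0 := by
    simp [gf, hf, hd0]
  have hg10 : g1 φ n m (2 * Real.pi) = g1 φ n m 0 := by
    simp [g1, u2, hf, hd0, hd20]
  -- first integration by parts
  have hIBP1 := intervalIntegral.integral_mul_deriv_eq_deriv_mul
    (u := gf φ n m) (u' := g1 φ n m) (v := Ff φ n m)
    (v' := fun θ => Ff φ n m θ * hf φ n m θ) (a := 0) (b := 2 * Real.pi)
    (fun x _ => hasDerivAt_gf hφ n m hne x) (fun x _ => hasDerivAt_Ff hφ n m x)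
    ((continuous_g1 hφ n m hne).intervalIntegrable 0 (2 * Real.pi))
    (((continuous_Ff hφ n m).mul (continuous_hf hφ n m)).intervalIntegrable 0 (2 * Real.pi))
  have hcancel : ∀ x, hf φ n m x * gf φ n m x = 1 := by
    intro x
    simp only [gf]
    rw [mul_one_div, div_self (hne x)]
  have hFeq : ∀ x, gf φ n m x * (Ff φ n m x * hf φ n m x) = Ff φ n m x := by
    intro x
    calc gf φ n m x * (Ff φ n m x * hf φ n m x)
        = Ff φ n m x * (hf φ n m x * gf φ n m x) := by ring
      _ = Ff φ n m x := by rw [hcancel x, mul_one]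
  rw [intervalIntegral.integral_congr (g := Ff φ n m) (fun x _ => hFeq x), hFF, hgf0] at hIBP1
  have hEq1 : (∫ θ in (0:ℝ)..(2 * Real.pi), Ff φ n m θ)
      = -∫ θ in (0:ℝ)..(2 * Real.pi), g1 φ n m θ * Ff φ n m θ := by
    rw [hIBP1]; ring
  -- second integration by parts
  have hIBP2 := intervalIntegral.integral_mul_deriv_eq_deriv_mul
    (u := fun θ => g1 φ n m θ * gf φ n m θ)
    (u' := fun θ => G2 φ n m θ * gf φ n m θ + g1 φ n m θ * g1 φ n m θ)
    (v := Ff φ n m) (v' := fun θ => Ff φ n m θ * hf φ n m θ) (a := 0) (b := 2 * Real.pi)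
    (fun x _ => (hasDerivAt_g1 hφ n m hne x).mul (hasDerivAt_gf hφ n m hne x))
    (fun x _ => hasDerivAt_Ff hφ n m x)
    ((((continuous_G2 hφ n m hne).mul (continuous_gf hφ n m hne)).add
      ((continuous_g1 hφ n m hne).mul (continuous_g1 hφ n m hne))).intervalIntegrable
      0 (2 * Real.pi))
    (((continuous_Ff hφ n m).mul (continuous_hf hφ n m)).intervalIntegrable 0 (2 * Real.pi))
  have hGeq : ∀ x, g1 φ n m x * gf φ n m x * (Ff φ n m x * hf φ n m x)
      = g1 φ n m x * Ff φ n m x := by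
    intro x
    calc g1 φ n m x * gf φ n m x * (Ff φ n m x * hf φ n m x)
        = g1 φ n m x * Ff φ n m x * (hf φ n m x * gf φ n m x) := by ring
      _ = g1 φ n m x * Ff φ n m x := by rw [hcancel x, mul_one]
  beta_reduce at hIBP2
  rw [intervalIntegral.integral_congr (g := fun x => g1 φ n m x * Ff φ n m x)
    (fun x _ => hGeq x), hFF, hgf0, hg10] at hIBP2
  have hEq2 : (∫ θ in (0:ℝ)..(2 * Real.pi), Ff φ n m θ)
      = ∫ θ in (0:ℝ)..(2 * Real.pi),
          (G2 φ n m θ * gf φ n m θ + g1 φ n m θ * g1 φ n m θ) * Ff φ n m θ := by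
    rw [hEq1, hIBP2]
    ring
  -- pointwise bound on the new integrand
  have hFnorm : ∀ x, ‖Ff φ n m x‖ = 1 := by
    intro x; simp [Ff, Complex.norm_exp]
  have hbound : ∀ x, ‖(G2 φ n m x * gf φ n m x + g1 φ n m x * g1 φ n m x) * Ff φ n m x‖
      ≤ C0 / s ^ 2 := by
    intro x
    set E : ℝ := ‖hf φ n m x‖ with hE_def
    have hEcs : c * s ≤ E := by rw [hE_def, hnorm_hf x]; exact hph x
    have hE0 : 0 < E := lt_of_lt_of_le (by positivity) hEcs
    have hU2 : ‖u2 φ m x‖ ≤ s * B2 := by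
      have h : ‖u2 φ m x‖ = |(m:ℝ)| * |deriv (deriv φ) x| := by
        simp [u2, abs_mul]
      rw [h]
      exact mul_le_mul hmles (hB2' x) (abs_nonneg _) hs0.le
    have hU3 : ‖u3 φ m x‖ ≤ s * B3 := by
      have h : ‖u3 φ m x‖ = |(m:ℝ)| * |deriv (deriv (deriv φ)) x| := by
        simp [u3, abs_mul]
      rw [h]
      exact mul_le_mul hmles (hB3' x) (abs_nonneg _) hs0.le
    have hgf_norm : ‖gf φ n m x‖ ≤ (c * s)⁻¹ := by
      rw [gf, norm_div, norm_one, one_div]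
      exact inv_anti₀ (by positivity) hEcs
    have hg1_norm : ‖g1 φ n m x‖ ≤ s * B2 / (c * s) ^ 2 := by
      rw [g1, norm_div, norm_neg, norm_pow]
      exact div_le_div₀ (by positivity) hU2 (by positivity)
        (pow_le_pow_left₀ (by positivity) hEcs 2)
    have hG2_norm : ‖G2 φ n m x‖ ≤ s * B3 / (c * s) ^ 2 + 2 * (s * B2) ^ 2 / (c * s) ^ 3 := by
      have hnum : ‖-u3 φ m x * hf φ n m x ^ 2
          - -u2 φ m x * (u2 φ m x * hf φ n m x + hf φ n m x * u2 φ m x)‖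
          ≤ s * B3 * E ^ 2 + 2 * (s * B2) ^ 2 * E := by
        have h1 : ‖u2 φ m x * hf φ n m x + hf φ n m x * u2 φ m x‖
            ≤ 2 * (‖u2 φ m x‖ * E) := by
          calc ‖u2 φ m x * hf φ n m x + hf φ n m x * u2 φ m x‖
              ≤ ‖u2 φ m x * hf φ n m x‖ + ‖hf φ n m x * u2 φ m x‖ := norm_add_le _ _
            _ = 2 * (‖u2 φ m x‖ * E) := by rw [norm_mul, norm_mul]; ring
        calc ‖-u3 φ m x * hf φ n m x ^ 2
            - -u2 φ m x * (u2 φ m x * hf φ n m x + hf φ n m x * u2 φ m x)‖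
            ≤ ‖-u3 φ m x * hf φ n m x ^ 2‖
              + ‖-u2 φ m x * (u2 φ m x * hf φ n m x + hf φ n m x * u2 φ m x)‖ :=
            norm_sub_le _ _
          _ ≤ s * B3 * E ^ 2 + 2 * (s * B2) ^ 2 * E := by
            rw [norm_mul, norm_mul, norm_neg, norm_neg, norm_pow]
            have hu2nn : (0:ℝ) ≤ ‖u2 φ m x‖ := norm_nonneg _
            have hu3nn : (0:ℝ) ≤ ‖u3 φ m x‖ := norm_nonneg _
            have hsB2 : (0:ℝ) ≤ s * B2 := by positivity
            nlinarith [mul_le_mul hU2 h1 (norm_nonneg _) hsB2,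
              mul_le_mul hU3 (le_refl (E^2)) (by positivity : (0:ℝ) ≤ E^2)
                (by positivity : (0:ℝ) ≤ s * B3),
              mul_le_mul hU2 (le_refl E) hE0.le hsB2]
      have hG2eq : ‖G2 φ n m x‖ = ‖-u3 φ m x * hf φ n m x ^ 2
          - -u2 φ m x * (u2 φ m x * hf φ n m x + hf φ n m x * u2 φ m x)‖ / E ^ 4 := by
        rw [G2, norm_div]
        congr 1
        rw [norm_pow, norm_pow]
        ring
      rw [hG2eq]
      have step1 : ‖-u3 φ m x * hf φ n m x ^ 2
          - -u2 φ m x * (u2 φ m x * hf φ n m x + hf φ n m x * u2 φ m x)‖ / E ^ 4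
          ≤ (s * B3 * E ^ 2 + 2 * (s * B2) ^ 2 * E) / E ^ 4 :=
        div_le_div_of_nonneg_right hnum (by positivity) |>.trans_eq rfl
      refine step1.trans ?_
      have hsplit : (s * B3 * E ^ 2 + 2 * (s * B2) ^ 2 * E) / E ^ 4
          = s * B3 / E ^ 2 + 2 * (s * B2) ^ 2 / E ^ 3 := by
        field_simp
      rw [hsplit]
      have t1 : s * B3 / E ^ 2 ≤ s * B3 / (c * s) ^ 2 :=
        div_le_div₀ (by positivity) le_rfl (by positivity)
          (pow_le_pow_left₀ (by positivity) hEcs 2)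
      have t2 : 2 * (s * B2) ^ 2 / E ^ 3 ≤ 2 * (s * B2) ^ 2 / (c * s) ^ 3 :=
        div_le_div₀ (by positivity) le_rfl (by positivity)
          (pow_le_pow_left₀ (by positivity) hEcs 3)
      linarith
    calc ‖(G2 φ n m x * gf φ n m x + g1 φ n m x * g1 φ n m x) * Ff φ n m x‖
        = ‖G2 φ n m x * gf φ n m x + g1 φ n m x * g1 φ n m x‖ := by
          rw [norm_mul, hFnorm, mul_one]
      _ ≤ ‖G2 φ n m x‖ * ‖gf φ n m x‖ + ‖g1 φ n m x‖ * ‖g1 φ n m x‖ := by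
          calc ‖G2 φ n m x * gf φ n m x + g1 φ n m x * g1 φ n m x‖
              ≤ ‖G2 φ n m x * gf φ n m x‖ + ‖g1 φ n m x * g1 φ n m x‖ := norm_add_le _ _
            _ = ‖G2 φ n m x‖ * ‖gf φ n m x‖ + ‖g1 φ n m x‖ * ‖g1 φ n m x‖ := by
                rw [norm_mul, norm_mul]
      _ ≤ (s * B3 / (c * s) ^ 2 + 2 * (s * B2) ^ 2 / (c * s) ^ 3) * (c * s)⁻¹
            + (s * B2 / (c * s) ^ 2) * (s * B2 / (c * s) ^ 2) := by
          refine add_le_add (mul_le_mul hG2_norm hgf_norm (norm_nonneg _) ?_)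
            (mul_le_mul hg1_norm hg1_norm (norm_nonneg _) ?_)
          · positivity
          · positivity
      _ = C0 / s ^ 2 := by
          rw [hC0_def]
          field_simp
          ring
  -- assemble
  have hInorm : ‖Icoef φ n m‖
      = 1 / (2 * Real.pi) * ‖∫ θ in (0:ℝ)..(2 * Real.pi), Ff φ n m θ‖ := by
    have hIc : Icoef φ n m
        = (1 / (2 * Real.pi) : ℂ) * ∫ θ in (0:ℝ)..(2 * Real.pi), Ff φ n m θ := rfl
    rw [hIc, norm_mul]
    congr 1
    rw [norm_div, norm_one]
    simp [Complex.norm_real, abs_of_pos Real.pi_pos]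
  have hbnd := intervalIntegral.norm_integral_le_of_norm_le_const
    (a := 0) (b := 2 * Real.pi) (C := C0 / s ^ 2)
    (f := fun θ => (G2 φ n m θ * gf φ n m θ + g1 φ n m θ * g1 φ n m θ) * Ff φ n m θ)
    (fun x _ => hbound x)
  calc ‖Icoef φ n m‖
      = 1 / (2 * Real.pi) * ‖∫ θ in (0:ℝ)..(2 * Real.pi), Ff φ n m θ‖ := hInorm
    _ = 1 / (2 * Real.pi) * ‖∫ θ in (0:ℝ)..(2 * Real.pi),
          (G2 φ n m θ * gf φ n m θ + g1 φ n m θ * g1 φ n m θ) * Ff φ n m θ‖ := by rw [hEq2]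
    _ ≤ 1 / (2 * Real.pi) * (C0 / s ^ 2 * |2 * Real.pi - 0|) := by
        refine mul_le_mul_of_nonneg_left hbnd (by positivity)
    _ = C0 / s ^ 2 := by
        rw [sub_zero, abs_of_pos Real.two_pi_pos]
        field_simp
    _ ≤ (C0 + 1) / s ^ 2 :=
        (div_le_div_iff_of_pos_right (by positivity)).mpr (by linarith)
    _ = (B3 / c ^ 3 + 3 * B2 ^ 2 / c ^ 4 + 1) / s ^ 2 := by rw [hC0_def]

end OffdiagHS

lemma quad_bound {x y C : ℝ} (hx : 1 ≤ x) (hy : 1 ≤ y) (hC : 0 ≤ C) :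
    x * (C / (x + y) ^ 2) ^ 2 ≤ C ^ 2 * (x ^ (-(3/2 : ℝ)) * y ^ (-(3/2 : ℝ))) := by
  have hx0 : (0:ℝ) < x := lt_of_lt_of_le one_pos hx
  have hy0 : (0:ℝ) < y := lt_of_lt_of_le one_pos hy
  have hxy : (0:ℝ) < x + y := by linarith
  have e1 : x * (C / (x + y) ^ 2) ^ 2 = C ^ 2 * (x / (x + y) ^ 4) := by
    field_simp
  have e2 : x ^ (-(3/2 : ℝ)) * y ^ (-(3/2 : ℝ)) = (x ^ (3/2 : ℝ) * y ^ (3/2 : ℝ))⁻¹ := by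
    rw [Real.rpow_neg hx0.le, Real.rpow_neg hy0.le, mul_inv]
  have e3 : x / (x + y) ^ 4 ≤ (x ^ (3/2 : ℝ) * y ^ (3/2 : ℝ))⁻¹ := by
    rw [inv_eq_one_div, div_le_div_iff₀ (by positivity) (by positivity)]
    have hx52 : x * (x ^ (3/2 : ℝ) * y ^ (3/2 : ℝ)) = x ^ (5/2 : ℝ) * y ^ (3/2 : ℝ) := by
      have : x * x ^ (3/2 : ℝ) = x ^ (5/2 : ℝ) := by
        nth_rewrite 1 [show x = x ^ (1 : ℝ) from (Real.rpow_one x).symm]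
        rw [← Real.rpow_add hx0]
        norm_num
      rw [← mul_assoc, this]
    rw [hx52]
    have h4 : ((x + y) : ℝ) ^ 4 = (x + y) ^ (5/2 : ℝ) * (x + y) ^ (3/2 : ℝ) := by
      rw [← Real.rpow_add hxy]
      rw [show (5/2 : ℝ) + (3/2 : ℝ) = ((4:ℕ) : ℝ) by norm_num, Real.rpow_natCast]
    rw [h4, one_mul]
    exact mul_le_mul (Real.rpow_le_rpow hx0.le (by linarith) (by norm_num))
      (Real.rpow_le_rpow hy0.le (by linarith) (by norm_num)) (by positivity) (by positivity)
  calc x * (C / (x + y) ^ 2) ^ 2 = C ^ 2 * (x / (x + y) ^ 4) := e1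
    _ ≤ C ^ 2 * (x ^ (3/2 : ℝ) * y ^ (3/2 : ℝ))⁻¹ :=
        mul_le_mul_of_nonneg_left e3 (by positivity)
    _ = C ^ 2 * (x ^ (-(3/2 : ℝ)) * y ^ (-(3/2 : ℝ))) := by rw [e2]

/-- For a lift `φ` of an orientation-preserving `C^∞` diffeomorphism of `S¹`,
`Σ_{n>0, m<0} |n|·|I_{n,m}|² < ∞` and `Σ_{n<0, m>0} |n|·|I_{n,m}|² < ∞`. -/
theorem offdiag_hilbert_schmidt (φ : ℝ → ℝ) (hφ : ContDiff ℝ (⊤ : ℕ∞) φ)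
    (hφ' : ∀ θ, 0 < deriv φ θ) (hlift : ∀ θ, φ (θ + 2 * Real.pi) = φ θ + 2 * Real.pi) :
    Summable (fun p : ℤ × ℤ =>
      if 0 < p.1 ∧ p.2 < 0 then (|p.1| : ℝ) * ‖Icoef φ p.1 p.2‖ ^ 2 else (0:ℝ)) ∧
    Summable (fun p : ℤ × ℤ =>
      if p.1 < 0 ∧ 0 < p.2 then (|p.1| : ℝ) * ‖Icoef φ p.1 p.2‖ ^ 2 else (0:ℝ)) := by
  obtain ⟨C, hC, hkey⟩ := OffdiagHS.Icoef_decay hφ hφ' hlift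
  have h1 : Summable fun k : ℤ => |(k:ℝ)| ^ (-(3/2 : ℝ)) :=
    Real.summable_abs_int_rpow (by norm_num)
  have hsum32 : Summable fun p : ℤ × ℤ =>
      C ^ 2 * (|(p.1 : ℝ)| ^ (-(3/2 : ℝ)) * |(p.2 : ℝ)| ^ (-(3/2 : ℝ))) :=
    (h1.mul_of_nonneg h1 (fun k => Real.rpow_nonneg (abs_nonneg _) _)
      (fun k => Real.rpow_nonneg (abs_nonneg _) _)).mul_left _
  have key_bound : ∀ (n m : ℤ), (m : ℝ) * (n : ℝ) < 0 →
      (|n| : ℝ) * ‖Icoef φ n m‖ ^ 2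
        ≤ C ^ 2 * (|(n : ℝ)| ^ (-(3/2 : ℝ)) * |(m : ℝ)| ^ (-(3/2 : ℝ))) := by
    intro n m hmn
    have hn0 : n ≠ 0 := by rintro rfl; simp at hmn
    have hm0 : m ≠ 0 := by rintro rfl; simp at hmn
    have hx : (1:ℝ) ≤ |(n : ℝ)| := by
      rw [← Int.cast_abs]; exact_mod_cast Int.one_le_abs hn0
    have hy : (1:ℝ) ≤ |(m : ℝ)| := by
      rw [← Int.cast_abs]; exact_mod_cast Int.one_le_abs hm0
    have hI := hkey n m hmn
    have hsq : ‖Icoef φ n m‖ ^ 2 ≤ (C / (|(n : ℝ)| + |(m : ℝ)|) ^ 2) ^ 2 :=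
      pow_le_pow_left₀ (norm_nonneg _) hI 2
    calc |(n : ℝ)| * ‖Icoef φ n m‖ ^ 2
        ≤ |(n : ℝ)| * (C / (|(n : ℝ)| + |(m : ℝ)|) ^ 2) ^ 2 :=
          mul_le_mul_of_nonneg_left hsq (abs_nonneg _)
      _ ≤ C ^ 2 * (|(n : ℝ)| ^ (-(3/2 : ℝ)) * |(m : ℝ)| ^ (-(3/2 : ℝ))) :=
          quad_bound hx hy hC.le
  constructor
  · refine Summable.of_nonneg_of_le (fun p => ?_) (fun p => ?_) hsum32
    · split_ifs with h
      · positivity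
      · exact le_refl 0
    · by_cases h : 0 < p.1 ∧ p.2 < 0
      · rw [if_pos h]
        exact key_bound p.1 p.2
          (mul_neg_of_neg_of_pos (by exact_mod_cast h.2) (by exact_mod_cast h.1))
      · rw [if_neg h]
        positivity
  · refine Summable.of_nonneg_of_le (fun p => ?_) (fun p => ?_) hsum32
    · split_ifs with h
      · positivity
      · exact le_refl 0
    · by_cases h : p.1 < 0 ∧ 0 < p.2
      · rw [if_pos h]
        exact key_bound p.1 p.2
          (mul_neg_of_pos_of_neg (by exact_mod_cast h.2) (by exact_mod_cast h.1))
      · rw [if_neg h]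
        positivity
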